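/- For every integer n ≥ 0, the number of 2-distant noncrossing matchings of [2n] equals the number of little Schröder paths of length 2n. -/

import Mathlib

/-- A step of a Schröder path: upstep, downstep, or a *double* horizontal step. -/
inductive SchStep : Type
  | up : SchStep
  | down : SchStep
  | horiz : SchStep
deriving DecidableEq

/-- The number of unit steps a step occupies: `horiz` is a double horizontal step. -/
def SchStep.len : SchStep → ℕ
  | .up => 1
  | .down => 1
  | .horiz => 2

/-- The change in height produced by a step. -/
def SchStep.rise : SchStep → ℤ
  | .up => 1
  | .down => -1
  | .horiz => 0

/-- The length of a path (a double horizontal step counts 2). -/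
def pathLen (p : List SchStep) : ℕ := (p.map SchStep.len).sum

/-- The final height of a path started at height 0. -/
def pathHeight (p : List SchStep) : ℤ := (p.map SchStep.rise).sum

/-- A big Schröder path: ends at height 0 and never goes below the x-axis. -/
def IsBigSchroeder (p : List SchStep) : Prop :=
  pathHeight p = 0 ∧ ∀ q : List SchStep, q <+: p → 0 ≤ pathHeight q

/-- A little Schröder path: a big Schröder path with no double horizontal step at
height 0. -/
def IsLittleSchroeder (p : List SchStep) : Prop :=
  IsBigSchroeder p ∧ ∀ q r : List SchStep, p = q ++ SchStep.horiz :: r → pathHeight q ≠ 0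

/-- A matching of `[2n]`: a set of edges `(i, j)` with `i < j`, all vertices lying in
`{1, …, 2n}`, such that every vertex of `{1, …, 2n}` belongs to exactly one edge. -/
def IsMatching (n : ℕ) (M : Finset (ℕ × ℕ)) : Prop :=
  (∀ e ∈ M, e.1 < e.2 ∧ 1 ≤ e.1 ∧ e.2 ≤ 2 * n) ∧
  (∀ v : ℕ, 1 ≤ v → v ≤ 2 * n → ∃! e, e ∈ M ∧ (v = e.1 ∨ v = e.2))

/-- A 2-distant crossing: edges `(i₁, j₁)` and `(i₂, j₂)` with `i₁ < i₂ < j₁ < j₂`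
and `j₁ - i₂ ≥ 2`. -/
def Has2DistantCrossing (M : Finset (ℕ × ℕ)) : Prop :=
  ∃ e ∈ M, ∃ f ∈ M, e.1 < f.1 ∧ f.1 < e.2 ∧ e.2 < f.2 ∧ f.1 + 2 ≤ e.2

namespace TD

def run : List SchStep → ℕ → List ℕ → Option (List (ℕ × ℕ))
  | [], _, [] => some []
  | [], _, _ :: _ => none
  | .up :: p, pos, st => run p (pos+1) (pos :: st)
  | .down :: p, pos, a :: st => (run p (pos+1) st).map (fun l => (a, pos) :: l)
  | .down :: _, _, [] => none
  | .horiz :: p, pos, a :: st => (run p (pos+2) (pos :: st)).map (fun l => (a, pos+1) :: l)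
  | .horiz :: _, _, [] => none

lemma pathLen_cons (s : SchStep) (p : List SchStep) : pathLen (s :: p) = s.len + pathLen p := by
  simp [pathLen]

lemma pathHeight_cons (s : SchStep) (p : List SchStep) :
    pathHeight (s :: p) = s.rise + pathHeight p := by
  simp [pathHeight]

lemma pathHeight_append (p q : List SchStep) :
    pathHeight (p ++ q) = pathHeight p + pathHeight q := by
  simp [pathHeight]

/-- C1': all emitted edges have second coordinate ≥ pos. -/
lemma run_snd_ge : ∀ (p : List SchStep) (pos : ℕ) (st : List ℕ) (l : List (ℕ × ℕ)),
    run p pos st = some l → ∀ e ∈ l, pos ≤ e.2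
  | [], pos, [], l, h => by simp [run] at h; subst h; simp
  | [], pos, a :: st, l, h => by simp [run] at h
  | .up :: p, pos, st, l, h => by
      simp only [run] at h
      intro e he
      exact le_trans (Nat.le_succ pos) (run_snd_ge p (pos+1) (pos::st) l h e he)
  | .down :: p, pos, [], l, h => by simp [run] at h
  | .down :: p, pos, a :: st, l, h => by
      simp only [run, Option.map_eq_some_iff] at h
      obtain ⟨l', hl', rfl⟩ := h
      intro e he
      rcases List.mem_cons.mp he with rfl | he
      · exact le_refl _
      · exact le_trans (Nat.le_succ pos) (run_snd_ge p (pos+1) st l' hl' e he)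
  | .horiz :: p, pos, [], l, h => by simp [run] at h
  | .horiz :: p, pos, a :: st, l, h => by
      simp only [run, Option.map_eq_some_iff] at h
      obtain ⟨l', hl', rfl⟩ := h
      intro e he
      rcases List.mem_cons.mp he with rfl | he
      · exact Nat.le_succ pos
      · exact le_trans (by omega) (run_snd_ge p (pos+2) (pos::st) l' hl' e he)

/-- C5: the emitted list is strictly sorted in the second coordinate. -/
lemma run_sorted : ∀ (p : List SchStep) (pos : ℕ) (st : List ℕ) (l : List (ℕ × ℕ)),
    run p pos st = some l → l.Pairwise (fun e f => e.2 < f.2)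
  | [], pos, [], l, h => by simp [run] at h; subst h; simp
  | [], pos, a :: st, l, h => by simp [run] at h
  | .up :: p, pos, st, l, h => by
      simp only [run] at h
      exact run_sorted p (pos+1) (pos::st) l h
  | .down :: p, pos, [], l, h => by simp [run] at h
  | .down :: p, pos, a :: st, l, h => by
      simp only [run, Option.map_eq_some_iff] at h
      obtain ⟨l', hl', rfl⟩ := h
      refine List.pairwise_cons.mpr ⟨fun f hf => ?_, run_sorted p (pos+1) st l' hl'⟩
      exact lt_of_lt_of_le (Nat.lt_succ_self pos) (run_snd_ge p (pos+1) st l' hl' f hf)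
  | .horiz :: p, pos, [], l, h => by simp [run] at h
  | .horiz :: p, pos, a :: st, l, h => by
      simp only [run, Option.map_eq_some_iff] at h
      obtain ⟨l', hl', rfl⟩ := h
      refine List.pairwise_cons.mpr ⟨fun f hf => ?_, run_sorted p (pos+2) (pos::st) l' hl'⟩
      exact lt_of_lt_of_le (Nat.lt_succ_self (pos+1)) (run_snd_ge p (pos+2) (pos::st) l' hl' f hf)

/-- L2: an edge closed exactly at `pos` must close the top of the stack. -/
lemma run_snd_eq : ∀ (p : List SchStep) (pos : ℕ) (st : List ℕ) (l : List (ℕ × ℕ)),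
    run p pos st = some l → ∀ e ∈ l, e.2 = pos → ∃ t, st = e.1 :: t
  | [], pos, [], l, h => by simp [run] at h; subst h; simp
  | [], pos, a :: st, l, h => by simp [run] at h
  | .up :: p, pos, st, l, h => by
      simp only [run] at h
      intro e he h2
      have := run_snd_ge p (pos+1) (pos::st) l h e he
      omega
  | .down :: p, pos, [], l, h => by simp [run] at h
  | .down :: p, pos, a :: st, l, h => by
      simp only [run, Option.map_eq_some_iff] at h
      obtain ⟨l', hl', rfl⟩ := h
      intro e he h2
      rcases List.mem_cons.mp he with rfl | he
      · exact ⟨st, rfl⟩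
      · have := run_snd_ge p (pos+1) st l' hl' e he; omega
  | .horiz :: p, pos, [], l, h => by simp [run] at h
  | .horiz :: p, pos, a :: st, l, h => by
      simp only [run, Option.map_eq_some_iff] at h
      obtain ⟨l', hl', rfl⟩ := h
      intro e he h2
      rcases List.mem_cons.mp he with rfl | he
      · simp at h2
      · have := run_snd_ge p (pos+2) (pos::st) l' hl' e he; omega

/-- C2: membership of a vertex in some edge. -/
lemma run_mem_iff : ∀ (p : List SchStep) (pos : ℕ) (st : List ℕ) (l : List (ℕ × ℕ)),
    run p pos st = some l → ∀ v : ℕ,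
      (∃ e ∈ l, v = e.1 ∨ v = e.2) ↔ (v ∈ st ∨ (pos ≤ v ∧ v < pos + pathLen p))
  | [], pos, [], l, h => by
      simp [run] at h; subst h; simp [pathLen]; all_goals omega
  | [], pos, a :: st, l, h => by simp [run] at h
  | .up :: p, pos, st, l, h => by
      simp only [run] at h
      intro v
      rw [run_mem_iff p (pos+1) (pos::st) l h v]
      simp only [pathLen_cons, SchStep.len, List.mem_cons]
      by_cases hv : v ∈ st <;> simp [hv] <;> omega
  | .down :: p, pos, [], l, h => by simp [run] at h
  | .down :: p, pos, a :: st, l, h => by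
      simp only [run, Option.map_eq_some_iff] at h
      obtain ⟨l', hl', rfl⟩ := h
      intro v
      constructor
      · rintro ⟨e, he, hv⟩
        rcases List.mem_cons.mp he with rfl | he
        · simp at hv
          rcases hv with rfl | rfl
          · left; simp
          · right; simp [pathLen_cons, SchStep.len]; all_goals omega
        · have := (run_mem_iff p (pos+1) st l' hl' v).mp ⟨e, he, hv⟩
          simp [pathLen_cons, SchStep.len, List.mem_cons]
          rcases this with h1 | h1
          · tauto
          · right; omega
      · intro hv
        by_cases hva : v = a
        · exact ⟨(a, pos), List.mem_cons_self, Or.inl hva⟩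
        by_cases hvp : v = pos
        · exact ⟨(a, pos), List.mem_cons_self, Or.inr hvp⟩
        · have : v ∈ st ∨ (pos + 1 ≤ v ∧ v < (pos+1) + pathLen p) := by
            simp [pathLen_cons, SchStep.len] at hv ⊢
            rcases hv with h1 | h1
            · rcases h1 with rfl | h1
              · exact absurd rfl hva
              · tauto
            · right; omega
          obtain ⟨e, he, hv2⟩ := (run_mem_iff p (pos+1) st l' hl' v).mpr this
          exact ⟨e, List.mem_cons_of_mem _ he, hv2⟩
  | .horiz :: p, pos, [], l, h => by simp [run] at h
  | .horiz :: p, pos, a :: st, l, h => by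
      simp only [run, Option.map_eq_some_iff] at h
      obtain ⟨l', hl', rfl⟩ := h
      intro v
      constructor
      · rintro ⟨e, he, hv⟩
        rcases List.mem_cons.mp he with rfl | he
        · simp at hv
          rcases hv with rfl | rfl
          · left; simp
          · right; simp [pathLen_cons, SchStep.len]; all_goals omega
        · have := (run_mem_iff p (pos+2) (pos::st) l' hl' v).mp ⟨e, he, hv⟩
          simp [pathLen_cons, SchStep.len, List.mem_cons] at this ⊢
          rcases this with (rfl | h1) | h1
          · right; omega
          · tauto
          · right; omega
      · intro hv
        by_cases hva : v = a
        · exact ⟨(a, pos+1), List.mem_cons_self, Or.inl hva⟩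
        by_cases hvp : v = pos + 1
        · exact ⟨(a, pos+1), List.mem_cons_self, Or.inr hvp⟩
        · have : v ∈ (pos :: st) ∨ (pos + 2 ≤ v ∧ v < (pos+2) + pathLen p) := by
            simp [pathLen_cons, SchStep.len, List.mem_cons] at hv ⊢
            rcases hv with h1 | h1
            · rcases h1 with rfl | h1
              · exact absurd rfl hva
              · tauto
            · omega
          obtain ⟨e, he, hv2⟩ := (run_mem_iff p (pos+2) (pos::st) l' hl' v).mpr this
          exact ⟨e, List.mem_cons_of_mem _ he, hv2⟩

/-- C1: bounds on emitted edges. -/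
lemma run_bounds : ∀ (p : List SchStep) (pos : ℕ) (st : List ℕ) (l : List (ℕ × ℕ)),
    run p pos st = some l → (∀ x ∈ st, 1 ≤ x ∧ x < pos) → 1 ≤ pos →
    ∀ e ∈ l, e.1 < e.2 ∧ 1 ≤ e.1 ∧ e.2 < pos + pathLen p ∧ (e.1 ∈ st ∨ pos ≤ e.1)
  | [], pos, [], l, h => by simp [run] at h; subst h; simp
  | [], pos, a :: st, l, h => by simp [run] at h
  | .up :: p, pos, st, l, h => by
      simp only [run] at h
      intro hst hpos e he
      have hb := run_bounds p (pos+1) (pos::st) l h ?_ (by omega) e he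
      · have h1 : e.1 ∈ st ∨ pos ≤ e.1 := by
          rcases hb.2.2.2 with h2 | h2
          · rcases List.mem_cons.mp h2 with rfl | h2
            · right; omega
            · left; exact h2
          · right; omega
        refine ⟨hb.1, hb.2.1, ?_, h1⟩
        have := hb.2.2.1; simp [pathLen_cons, SchStep.len]; all_goals omega
      · intro x hx
        rcases List.mem_cons.mp hx with rfl | hx
        · omega
        · have := hst x hx; omega
  | .down :: p, pos, [], l, h => by simp [run] at h
  | .down :: p, pos, a :: st, l, h => by
      simp only [run, Option.map_eq_some_iff] at h
      obtain ⟨l', hl', rfl⟩ := h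
      intro hst hpos e he
      rcases List.mem_cons.mp he with rfl | he
      · have := hst a (by simp)
        refine ⟨by omega, by omega, ?_, Or.inl (by simp)⟩
        simp [pathLen_cons, SchStep.len]; all_goals omega
      · have hb := run_bounds p (pos+1) st l' hl' ?_ (by omega) e he
        · refine ⟨hb.1, hb.2.1, ?_, ?_⟩
          · have := hb.2.2.1; simp [pathLen_cons, SchStep.len]; all_goals omega
          · rcases hb.2.2.2 with h2 | h2
            · exact Or.inl (List.mem_cons_of_mem _ h2)
            · right; omega
        · intro x hx
          have := hst x (List.mem_cons_of_mem _ hx); omega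
  | .horiz :: p, pos, [], l, h => by simp [run] at h
  | .horiz :: p, pos, a :: st, l, h => by
      simp only [run, Option.map_eq_some_iff] at h
      obtain ⟨l', hl', rfl⟩ := h
      intro hst hpos e he
      rcases List.mem_cons.mp he with rfl | he
      · have := hst a (by simp)
        refine ⟨by omega, by omega, ?_, Or.inl (by simp)⟩
        simp [pathLen_cons, SchStep.len]; all_goals omega
      · have hb := run_bounds p (pos+2) (pos::st) l' hl' ?_ (by omega) e he
        · refine ⟨hb.1, hb.2.1, ?_, ?_⟩
          · have := hb.2.2.1; simp [pathLen_cons, SchStep.len]; all_goals omega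
          · rcases hb.2.2.2 with h2 | h2
            · rcases List.mem_cons.mp h2 with rfl | h2
              · right; omega
              · exact Or.inl (List.mem_cons_of_mem _ h2)
            · right; omega
        · intro x hx
          rcases List.mem_cons.mp hx with rfl | hx
          · omega
          · have := hst x (List.mem_cons_of_mem _ hx); omega

/-- C3: distinct edges have disjoint vertex sets. -/
lemma run_disjoint : ∀ (p : List SchStep) (pos : ℕ) (st : List ℕ) (l : List (ℕ × ℕ)),
    run p pos st = some l → (∀ x ∈ st, 1 ≤ x ∧ x < pos) → 1 ≤ pos → st.Nodup →
    ∀ e ∈ l, ∀ f ∈ l, (e.1 = f.1 ∨ e.1 = f.2 ∨ e.2 = f.1 ∨ e.2 = f.2) → e = f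
  | [], pos, [], l, h => by simp [run] at h; subst h; simp
  | [], pos, a :: st, l, h => by simp [run] at h
  | .up :: p, pos, st, l, h => by
      simp only [run] at h
      intro hst hpos hnd
      exact run_disjoint p (pos+1) (pos::st) l h
        (by intro x hx; rcases List.mem_cons.mp hx with rfl | hx
            · omega
            · have := hst x hx; omega)
        (by omega)
        (List.nodup_cons.mpr ⟨fun hc => by have := hst pos hc; omega, hnd⟩)
  | .down :: p, pos, [], l, h => by simp [run] at h
  | .down :: p, pos, a :: st, l, h => by
      simp only [run, Option.map_eq_some_iff] at h
      obtain ⟨l', hl', rfl⟩ := h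
      intro hst hpos hnd
      have hst' : ∀ x ∈ st, 1 ≤ x ∧ x < pos + 1 := by
        intro x hx; have := hst x (List.mem_cons_of_mem _ hx); omega
      have ha := hst a (by simp)
      have hnotmem : a ∉ st := (List.nodup_cons.mp hnd).1
      have key : ∀ f ∈ l', f.1 ≠ a ∧ f.1 ≠ pos ∧ f.2 ≠ a ∧ f.2 ≠ pos := by
        intro f hf
        have hb := run_bounds p (pos+1) st l' hl' hst' (by omega) f hf
        have h2 := run_snd_ge p (pos+1) st l' hl' f hf
        rcases hb.2.2.2 with h1 | h1
        · have := hst f.1 (List.mem_cons_of_mem _ h1)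
          exact ⟨fun hc => hnotmem (hc ▸ h1), by omega, by omega, by omega⟩
        · exact ⟨by omega, by omega, by omega, by omega⟩
      intro e he f hf hshare
      rcases List.mem_cons.mp he with rfl | he <;> rcases List.mem_cons.mp hf with rfl | hf
      · rfl
      · exact absurd hshare (by have := key f hf; simp; omega)
      · exact absurd hshare (by have := key e he; simp; omega)
      · exact run_disjoint p (pos+1) st l' hl' hst' (by omega) (List.nodup_cons.mp hnd).2
          e he f hf hshare
  | .horiz :: p, pos, [], l, h => by simp [run] at h
  | .horiz :: p, pos, a :: st, l, h => by
      simp only [run, Option.map_eq_some_iff] at h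
      obtain ⟨l', hl', rfl⟩ := h
      intro hst hpos hnd
      have ha := hst a (by simp)
      have hnotmem : a ∉ st := (List.nodup_cons.mp hnd).1
      have hst' : ∀ x ∈ pos :: st, 1 ≤ x ∧ x < pos + 2 := by
        intro x hx; rcases List.mem_cons.mp hx with rfl | hx
        · omega
        · have := hst x (List.mem_cons_of_mem _ hx); omega
      have hnd' : (pos :: st).Nodup := List.nodup_cons.mpr
        ⟨fun hc => by have := hst pos (List.mem_cons_of_mem _ hc); omega, (List.nodup_cons.mp hnd).2⟩
      have key : ∀ f ∈ l', f.1 ≠ a ∧ f.1 ≠ pos + 1 ∧ f.2 ≠ a ∧ f.2 ≠ pos + 1 := by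
        intro f hf
        have hb := run_bounds p (pos+2) (pos::st) l' hl' hst' (by omega) f hf
        have h2 := run_snd_ge p (pos+2) (pos::st) l' hl' f hf
        rcases hb.2.2.2 with h1 | h1
        · rcases List.mem_cons.mp h1 with heq | h1
          · exact ⟨by omega, by omega, by omega, by omega⟩
          · have := hst f.1 (List.mem_cons_of_mem _ h1)
            exact ⟨fun hc => hnotmem (hc ▸ h1), by omega, by omega, by omega⟩
        · exact ⟨by omega, by omega, by omega, by omega⟩
      intro e he f hf hshare
      rcases List.mem_cons.mp he with rfl | he <;> rcases List.mem_cons.mp hf with rfl | hf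
      · rfl
      · exact absurd hshare (by have := key f hf; simp; omega)
      · exact absurd hshare (by have := key e he; simp; omega)
      · exact run_disjoint p (pos+2) (pos::st) l' hl' hst' (by omega) hnd' e he f hf hshare

/-- C4: no 2-distant crossing among emitted edges. -/
lemma run_nocross : ∀ (p : List SchStep) (pos : ℕ) (st : List ℕ) (l : List (ℕ × ℕ)),
    run p pos st = some l → (∀ x ∈ st, 1 ≤ x ∧ x < pos) → 1 ≤ pos →
    st.Pairwise (· > ·) →
    ∀ e ∈ l, ∀ f ∈ l, e.1 < f.1 → f.1 < e.2 → e.2 < f.2 → f.1 + 2 ≤ e.2 → False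
  | [], pos, [], l, h => by simp [run] at h; subst h; simp
  | [], pos, a :: st, l, h => by simp [run] at h
  | .up :: p, pos, st, l, h => by
      simp only [run] at h
      intro hst hpos hsrt
      exact run_nocross p (pos+1) (pos::st) l h
        (by intro x hx; rcases List.mem_cons.mp hx with rfl | hx
            · omega
            · have := hst x hx; omega)
        (by omega)
        (List.pairwise_cons.mpr ⟨fun x hx => (hst x hx).2, hsrt⟩)
  | .down :: p, pos, [], l, h => by simp [run] at h
  | .down :: p, pos, a :: st, l, h => by
      simp only [run, Option.map_eq_some_iff] at h
      obtain ⟨l', hl', rfl⟩ := h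
      intro hst hpos hsrt
      have hst' : ∀ x ∈ st, 1 ≤ x ∧ x < pos + 1 := by
        intro x hx; have := hst x (List.mem_cons_of_mem _ hx); omega
      have hagt : ∀ x ∈ st, x < a := fun x hx => (List.pairwise_cons.mp hsrt).1 x hx
      intro e he f hf h1 h2 h3 h4
      rcases List.mem_cons.mp he with rfl | he <;> rcases List.mem_cons.mp hf with rfl | hf
      · omega
      · -- e = (a, pos), f ∈ l'
        have hb := run_bounds p (pos+1) st l' hl' hst' (by omega) f hf
        rcases hb.2.2.2 with hm | hm
        · have := hagt f.1 hm; simp at h1 h2; omega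
        · simp at h2; omega
      · -- f = (a, pos), e ∈ l'
        have h2' := run_snd_ge p (pos+1) st l' hl' e he
        simp at h3; omega
      · exact run_nocross p (pos+1) st l' hl' hst' (by omega)
          (List.pairwise_cons.mp hsrt).2 e he f hf h1 h2 h3 h4
  | .horiz :: p, pos, [], l, h => by simp [run] at h
  | .horiz :: p, pos, a :: st, l, h => by
      simp only [run, Option.map_eq_some_iff] at h
      obtain ⟨l', hl', rfl⟩ := h
      intro hst hpos hsrt
      have ha := hst a (by simp)
      have hagt : ∀ x ∈ st, x < a := fun x hx => (List.pairwise_cons.mp hsrt).1 x hx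
      have hst' : ∀ x ∈ pos :: st, 1 ≤ x ∧ x < pos + 2 := by
        intro x hx; rcases List.mem_cons.mp hx with rfl | hx
        · omega
        · have := hst x (List.mem_cons_of_mem _ hx); omega
      have hsrt' : (pos :: st).Pairwise (· > ·) := List.pairwise_cons.mpr
        ⟨fun x hx => (hst x (List.mem_cons_of_mem _ hx)).2, (List.pairwise_cons.mp hsrt).2⟩
      intro e he f hf h1 h2 h3 h4
      rcases List.mem_cons.mp he with rfl | he <;> rcases List.mem_cons.mp hf with rfl | hf
      · omega
      · -- e = (a, pos+1), f ∈ l'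
        have hb := run_bounds p (pos+2) (pos::st) l' hl' hst' (by omega) f hf
        rcases hb.2.2.2 with hm | hm
        · rcases List.mem_cons.mp hm with heq | hm
          · simp at h1 h2 h4; omega
          · have := hagt f.1 hm; simp at h1; omega
        · simp at h2; omega
      · have h2' := run_snd_ge p (pos+2) (pos::st) l' hl' e he
        simp at h3; omega
      · exact run_nocross p (pos+2) (pos::st) l' hl' hst' (by omega) hsrt'
          e he f hf h1 h2 h3 h4

lemma SchStep.len_pos (s : SchStep) : 1 ≤ s.len := by cases s <;> simp [SchStep.len]

lemma run_nil_of_some_nil {p : List SchStep} {pos : ℕ} {st : List ℕ}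
    (h : run p pos st = some []) : p = [] ∧ st = [] := by
  have hm := run_mem_iff p pos st [] h
  have hlen : pathLen p = 0 := by
    by_contra hc
    have := (hm pos).mpr (Or.inr ⟨le_refl _, by omega⟩)
    simp at this
  have hst : st = [] := by
    rw [List.eq_nil_iff_forall_not_mem]
    intro v hv
    have := (hm v).mpr (Or.inl hv)
    simp at this
  refine ⟨?_, hst⟩
  cases p with
  | nil => rfl
  | cons s p =>
      rw [pathLen_cons] at hlen
      have := SchStep.len_pos s
      omega

lemma run_inj : ∀ (p q : List SchStep) (pos : ℕ) (st : List ℕ) (l : List (ℕ × ℕ)),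
    run p pos st = some l → run q pos st = some l → (∀ x ∈ st, x < pos) → p = q
  | [], q, pos, st, l, hp, hq, hst => by
      cases st with
      | cons a t => simp [run] at hp
      | nil =>
          simp only [run, Option.some_inj] at hp
          subst hp
          exact ((run_nil_of_some_nil hq).1).symm
  | .up :: p, q, pos, st, l, hp, hq, hst => by
      simp only [run] at hp
      have hge := run_snd_ge p (pos+1) (pos::st) l hp
      cases q with
      | nil =>
          cases st with
          | cons a t => simp [run] at hq
          | nil =>
              simp only [run, Option.some_inj] at hq
              subst hq
              have := (run_nil_of_some_nil hp).2
              simp at this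
      | cons s q =>
        cases s with
        | up =>
            simp only [run] at hq
            rw [run_inj p q (pos+1) (pos::st) l hp hq
              (by intro x hx; rcases List.mem_cons.mp hx with rfl | hx
                  · omega
                  · have := hst x hx; omega)]
        | down =>
            cases st with
            | nil => simp [run] at hq
            | cons a st =>
                simp only [run, Option.map_eq_some_iff] at hq
                obtain ⟨l', hl', rfl⟩ := hq
                have := hge (a, pos) (by simp)
                simp at this
        | horiz =>
            cases st with
            | nil => simp [run] at hq
            | cons a st =>
                simp only [run, Option.map_eq_some_iff] at hq
                obtain ⟨l', hl', rfl⟩ := hq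
                obtain ⟨t, ht⟩ := run_snd_eq p (pos+1) (pos::a::st) _ hp (a, pos+1) (by simp) rfl
                have ha := hst a (by simp)
                simp at ht
                omega
  | .down :: p, q, pos, st, l, hp, hq, hst => by
      cases st with
      | nil => simp [run] at hp
      | cons a st =>
        simp only [run, Option.map_eq_some_iff] at hp
        obtain ⟨l', hl', rfl⟩ := hp
        cases q with
        | nil => simp [run] at hq
        | cons s q =>
          cases s with
          | up =>
              simp only [run] at hq
              have := run_snd_ge q (pos+1) (pos::a::st) _ hq (a, pos) (by simp)
              simp at this
          | down =>
              simp only [run, Option.map_eq_some_iff] at hq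
              obtain ⟨l'', hl'', heq⟩ := hq
              have : l' = l'' := by simpa using heq.symm
              subst this
              rw [run_inj p q (pos+1) st l' hl' hl''
                (by intro x hx; have := hst x (List.mem_cons_of_mem _ hx); omega)]
          | horiz =>
              simp only [run, Option.map_eq_some_iff] at hq
              obtain ⟨l'', hl'', heq⟩ := hq
              simp at heq
  | .horiz :: p, q, pos, st, l, hp, hq, hst => by
      cases st with
      | nil => simp [run] at hp
      | cons a st =>
        simp only [run, Option.map_eq_some_iff] at hp
        obtain ⟨l', hl', rfl⟩ := hp
        cases q with
        | nil => simp [run] at hq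
        | cons s q =>
          cases s with
          | up =>
              simp only [run] at hq
              obtain ⟨t, ht⟩ := run_snd_eq q (pos+1) (pos::a::st) _ hq (a, pos+1) (by simp) rfl
              have ha := hst a (by simp)
              simp at ht
              omega
          | down =>
              simp only [run, Option.map_eq_some_iff] at hq
              obtain ⟨l'', hl'', heq⟩ := hq
              simp at heq
          | horiz =>
              simp only [run, Option.map_eq_some_iff] at hq
              obtain ⟨l'', hl'', heq⟩ := hq
              have : l' = l'' := by simpa using heq.symm
              subst this
              rw [run_inj p q (pos+2) (pos::st) l' hl' hl''
                (by intro x hx; rcases List.mem_cons.mp hx with rfl | hx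
                    · omega
                    · have := hst x (List.mem_cons_of_mem _ hx); omega)]

lemma run_append : ∀ (q r : List SchStep) (pos : ℕ) (st : List ℕ) (l : List (ℕ × ℕ)),
    run (q ++ r) pos st = some l →
    ∃ (st₁ : List ℕ) (l₂ : List (ℕ × ℕ)),
      run r (pos + pathLen q) st₁ = some l₂ ∧ (st₁.length : ℤ) = st.length + pathHeight q
  | [], r, pos, st, l, h => by
      refine ⟨st, l, ?_, by simp [pathHeight]⟩
      simpa [pathLen] using h
  | .up :: q, r, pos, st, l, h => by
      simp only [List.cons_append, run] at h
      obtain ⟨st₁, l₂, h1, h2⟩ := run_append q r (pos+1) (pos::st) l h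
      refine ⟨st₁, l₂, ?_, ?_⟩
      · rw [pathLen_cons]; convert h1 using 2; simp [SchStep.len]; omega
      · rw [pathHeight_cons]; simp [SchStep.rise] at h2 ⊢; omega
  | .down :: q, r, pos, st, l, h => by
      simp only [List.cons_append, run] at h
      cases st with
      | nil => simp [run] at h
      | cons a st =>
          simp only [run, Option.map_eq_some_iff] at h
          obtain ⟨l', hl', rfl⟩ := h
          obtain ⟨st₁, l₂, h1, h2⟩ := run_append q r (pos+1) st l' hl'
          refine ⟨st₁, l₂, ?_, ?_⟩
          · rw [pathLen_cons]; convert h1 using 2; simp [SchStep.len]; omega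
          · rw [pathHeight_cons]; simp [SchStep.rise] at h2 ⊢; omega
  | .horiz :: q, r, pos, st, l, h => by
      simp only [List.cons_append, run] at h
      cases st with
      | nil => simp [run] at h
      | cons a st =>
          simp only [run, Option.map_eq_some_iff] at h
          obtain ⟨l', hl', rfl⟩ := h
          obtain ⟨st₁, l₂, h1, h2⟩ := run_append q r (pos+2) (pos::st) l' hl'
          refine ⟨st₁, l₂, ?_, ?_⟩
          · rw [pathLen_cons]; convert h1 using 2; simp [SchStep.len]; omega
          · rw [pathHeight_cons]; simp [SchStep.rise] at h2 ⊢; omega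

/-- a successful run from the empty stack yields a little Schröder path. -/
lemma little_of_run {p : List SchStep} {l : List (ℕ × ℕ)} (h : run p 1 [] = some l) :
    IsLittleSchroeder p := by
  have height0 : pathHeight p = 0 := by
    obtain ⟨st₁, l₂, h1, h2⟩ := run_append p [] 1 [] l (by simpa using h)
    have : st₁ = [] := by
      cases st₁ with
      | nil => rfl
      | cons a t => simp [run] at h1
    subst this
    simp at h2
    omega
  refine ⟨⟨height0, ?_⟩, ?_⟩
  · rintro q ⟨r, rfl⟩
    obtain ⟨st₁, l₂, h1, h2⟩ := run_append q r 1 [] l h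
    simp at h2
    have : (0:ℤ) ≤ st₁.length := by positivity
    omega
  · rintro q r rfl
    obtain ⟨st₁, l₂, h1, h2⟩ := run_append q (.horiz :: r) 1 [] l h
    cases st₁ with
    | nil => simp [run] at h1
    | cons a t =>
        simp at h2
        intro hc
        rw [hc] at h2
        omega

/-- a little Schröder path runs successfully. -/
lemma run_of_little_aux : ∀ (p : List SchStep) (pos : ℕ) (st : List ℕ),
    (∀ q r : List SchStep, p = q ++ r → 0 ≤ (st.length : ℤ) + pathHeight q) →
    ((st.length : ℤ) + pathHeight p = 0) →
    (∀ q r : List SchStep, p = q ++ SchStep.horiz :: r → (st.length : ℤ) + pathHeight q ≠ 0) →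
    ∃ l, run p pos st = some l
  | [], pos, st, h1, h2, h3 => by
      have : st = [] := by
        cases st with
        | nil => rfl
        | cons a t => simp [pathHeight] at h2; omega
      subst this
      exact ⟨[], rfl⟩
  | .up :: p, pos, st, h1, h2, h3 => by
      obtain ⟨l, hl⟩ := run_of_little_aux p (pos+1) (pos :: st)
        (fun q r hqr => by
          have := h1 (.up :: q) r (by rw [hqr]; rfl)
          rw [pathHeight_cons] at this
          simp [SchStep.rise] at this ⊢
          omega)
        (by rw [pathHeight_cons] at h2; simp [SchStep.rise] at h2 ⊢; omega)
        (fun q r hqr => by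
          have := h3 (.up :: q) r (by rw [hqr]; rfl)
          rw [pathHeight_cons] at this
          simp [SchStep.rise] at this ⊢
          omega)
      exact ⟨l, by simpa [run] using hl⟩
  | .down :: p, pos, st, h1, h2, h3 => by
      have hne : st ≠ [] := by
        intro hc
        have := h1 [.down] p rfl
        subst hc
        simp [pathHeight, SchStep.rise] at this
      obtain ⟨a, st, rfl⟩ : ∃ a t, st = a :: t := by
        cases st with
        | nil => exact absurd rfl hne
        | cons a t => exact ⟨a, t, rfl⟩
      obtain ⟨l, hl⟩ := run_of_little_aux p (pos+1) st
        (fun q r hqr => by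
          have := h1 (.down :: q) r (by rw [hqr]; rfl)
          rw [pathHeight_cons] at this
          simp [SchStep.rise] at this ⊢
          omega)
        (by rw [pathHeight_cons] at h2; simp [SchStep.rise] at h2 ⊢; omega)
        (fun q r hqr => by
          have := h3 (.down :: q) r (by rw [hqr]; rfl)
          rw [pathHeight_cons] at this
          simp [SchStep.rise] at this ⊢
          omega)
      exact ⟨(a, pos) :: l, by simp [run, hl]⟩
  | .horiz :: p, pos, st, h1, h2, h3 => by
      have hne : st ≠ [] := by
        intro hc
        have := h3 [] p rfl
        subst hc
        simp [pathHeight] at this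
      obtain ⟨a, st, rfl⟩ : ∃ a t, st = a :: t := by
        cases st with
        | nil => exact absurd rfl hne
        | cons a t => exact ⟨a, t, rfl⟩
      obtain ⟨l, hl⟩ := run_of_little_aux p (pos+2) (pos :: st)
        (fun q r hqr => by
          have := h1 (.horiz :: q) r (by rw [hqr]; rfl)
          rw [pathHeight_cons] at this
          simp [SchStep.rise] at this ⊢
          omega)
        (by rw [pathHeight_cons] at h2; simp [SchStep.rise] at h2 ⊢; omega)
        (fun q r hqr => by
          have := h3 (.horiz :: q) r (by rw [hqr]; rfl)
          rw [pathHeight_cons] at this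
          simp [SchStep.rise] at this ⊢
          omega)
      exact ⟨(a, pos+1) :: l, by simp [run, hl]⟩

lemma run_of_little {p : List SchStep} (h : IsLittleSchroeder p) :
    ∃ l, run p 1 [] = some l := by
  obtain ⟨⟨hh, hpre⟩, hhor⟩ := h
  apply run_of_little_aux p 1 []
  · intro q r hqr
    have := hpre q ⟨r, hqr.symm⟩
    simpa using this
  · simpa using hh
  · intro q r hqr
    have := hhor q r hqr
    simpa using this

def encode (M : Finset (ℕ × ℕ)) : ℕ → ℕ → List SchStep
  | 0, _ => []
  | fuel+1, pos =>
    if _h : ∃ e ∈ M, e.1 = pos then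
      if _h2 : ∃ f ∈ M, f.2 = pos + 1 ∧ f.1 < pos then
        .horiz :: encode M (fuel - 1) (pos+2)
      else .up :: encode M fuel (pos+1)
    else .down :: encode M fuel (pos+1)
  termination_by fuel => fuel
  decreasing_by all_goals omega

lemma encode_spec {n : ℕ} {M : Finset (ℕ × ℕ)} (hM : IsMatching n M)
    (hnc : ¬ Has2DistantCrossing M) :
    ∀ (fuel pos : ℕ) (st : List ℕ),
    pos + fuel = 2*n + 1 → 1 ≤ pos →
    (∀ a : ℕ, a ∈ st ↔ (a < pos ∧ ∃ e ∈ M, e.1 = a ∧ pos ≤ e.2)) →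
    st.Pairwise (· > ·) →
    (∀ f ∈ M, f.2 = pos → (pos - 1) ∈ st → pos - 1 ≤ f.1) →
    ∃ l, run (encode M fuel pos) pos st = some l ∧
      (∀ e, e ∈ l ↔ (e ∈ M ∧ pos ≤ e.2)) ∧ pathLen (encode M fuel pos) = fuel := by
  have huniq : ∀ e ∈ M, ∀ f ∈ M, ∀ v : ℕ, (v = e.1 ∨ v = e.2) → (v = f.1 ∨ v = f.2) →
      e.1 = f.1 ∧ e.2 = f.2 := by
    intro e he f hf v hv1 hv2
    have hb := hM.1 e he
    have hv : 1 ≤ v ∧ v ≤ 2*n := by rcases hv1 with rfl | rfl <;> omega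
    have := ExistsUnique.unique (hM.2 v hv.1 hv.2) ⟨he, hv1⟩ ⟨hf, hv2⟩
    exact ⟨by rw [this], by rw [this]⟩
  intro fuel
  induction fuel using Nat.strong_induction_on with
  | _ fuel ih =>
  match fuel with
  | 0 =>
      intro pos st hpf hpos hst hsrt hI2
      have hstnil : st = [] := by
        rw [List.eq_nil_iff_forall_not_mem]
        intro a ha
        obtain ⟨_, e, he, _, h2⟩ := (hst a).mp ha
        have := hM.1 e he
        omega
      subst hstnil
      refine ⟨[], by simp [encode, run], fun e => ?_, by simp [encode, pathLen]⟩
      simp only [List.not_mem_nil, false_iff]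
      rintro ⟨he, h2⟩
      have := hM.1 e he
      omega
  | fuel + 1 =>
      intro pos st hpf hpos hst hsrt hI2
      have hpos2n : pos ≤ 2 * n := by omega
      obtain ⟨e₀, ⟨he₀, hv₀⟩, -⟩ := hM.2 pos hpos hpos2n
      have hb₀ := hM.1 e₀ he₀
      by_cases hop : ∃ e ∈ M, e.1 = pos
      · -- pos is an opener
        obtain ⟨eo, heo, heo1⟩ := id hop
        have hbo := hM.1 eo heo
        by_cases hsp : ∃ f ∈ M, f.2 = pos + 1 ∧ f.1 < pos
        · -- special: horiz step
          obtain ⟨f, hf, hf2, hf1⟩ := id hsp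
          have hbf := hM.1 f hf
          have hfst : f.1 ∈ st := (hst f.1).mpr ⟨hf1, f, hf, rfl, by omega⟩
          have hmax : ∀ b ∈ st, b ≤ f.1 := by
            intro b hb
            by_contra hbgt
            obtain ⟨hblt, g, hg, hg1, hg2⟩ := (hst b).mp hb
            have hbg := hM.1 g hg
            have hgne : g.2 ≠ pos := by
              intro hc
              have := huniq g hg eo heo pos (Or.inr hc.symm) (Or.inl heo1.symm)
              omega
            have hgne2 : g.2 ≠ pos + 1 := by
              intro hc
              have := huniq g hg f hf (pos+1) (Or.inr hc.symm) (Or.inr hf2.symm)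
              omega
            exact hnc ⟨f, hf, g, hg, by omega, by omega, by omega, by omega⟩
          obtain ⟨st₂, hst₂⟩ : ∃ t, st = f.1 :: t := by
            cases st with
            | nil => simp at hfst
            | cons b t =>
                rcases List.mem_cons.mp hfst with heq | hmem
                · exact ⟨t, by rw [heq]⟩
                · have := (List.pairwise_cons.mp hsrt).1 f.1 hmem
                  have := hmax b (by simp)
                  omega
          subst hst₂
          have heo2 : pos + 2 ≤ eo.2 := by
            rcases Nat.lt_or_ge eo.2 (pos+2) with hlt | hge
            · exfalso
              have hc : eo.2 = pos + 1 := by omega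
              have := huniq eo heo f hf (pos+1) (Or.inr hc.symm) (Or.inr hf2.symm)
              omega
            · exact hge
          have hfuel : 1 ≤ fuel := by omega
          obtain ⟨l', hrun', hmem', hlen'⟩ := ih (fuel - 1) (by omega) (pos+2) (pos :: st₂)
            (by omega) (by omega)
            (by
              intro x
              constructor
              · intro hx
                rcases List.mem_cons.mp hx with rfl | hx
                · exact ⟨by omega, eo, heo, heo1, heo2⟩
                · have hxst : x ∈ f.1 :: st₂ := List.mem_cons_of_mem _ hx
                  obtain ⟨hxlt, g, hg, hg1, hg2⟩ := (hst x).mp hxst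
                  have hxne : x ≠ f.1 := by
                    intro hc
                    have := (List.pairwise_cons.mp hsrt).1 x hx
                    omega
                  have hgne : g.2 ≠ pos := by
                    intro hc
                    have := huniq g hg eo heo pos (Or.inr hc.symm) (Or.inl heo1.symm)
                    omega
                  have hgne2 : g.2 ≠ pos + 1 := by
                    intro hc
                    have := huniq g hg f hf (pos+1) (Or.inr hc.symm) (Or.inr hf2.symm)
                    omega
                  exact ⟨by omega, g, hg, hg1, by omega⟩
              · rintro ⟨hxlt, g, hg, hg1, hg2⟩
                have hbg := hM.1 g hg
                have hxne1 : x ≠ pos + 1 := by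
                  intro hc
                  have := huniq g hg f hf (pos+1) (Or.inl (hc ▸ hg1).symm)
                    (Or.inr hf2.symm)
                  omega
                rcases Nat.lt_or_ge x pos with hxp | hxp
                · have hxst : x ∈ f.1 :: st₂ := (hst x).mpr ⟨hxp, g, hg, hg1, by omega⟩
                  rcases List.mem_cons.mp hxst with heq | hmem
                  · exfalso
                    have := huniq g hg f hf x (Or.inl hg1.symm)
                      (Or.inl (by rw [heq]))
                    omega
                  · exact List.mem_cons_of_mem _ hmem
                · have : x = pos := by omega
                  simp [this])
            (by
              refine List.pairwise_cons.mpr ⟨fun x hx => ?_, (List.pairwise_cons.mp hsrt).2⟩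
              have := (hst x).mp (List.mem_cons_of_mem _ hx)
              omega)
            (by
              intro g hg hg2 hmem
              exfalso
              rcases List.mem_cons.mp hmem with heq | hmem
              · omega
              · have := (hst (pos+1)).mp (List.mem_cons_of_mem _ hmem)
                omega)
          refine ⟨(f.1, pos+1) :: l', ?_, ?_, ?_⟩
          · simp only [encode, hop, hsp, dite_true, run, Option.map_eq_some_iff]
            exact ⟨l', hrun', rfl⟩
          · intro e
            constructor
            · intro he
              rcases List.mem_cons.mp he with rfl | he
              · have hfeq : f = (f.1, pos+1) := by rw [← hf2]
                exact ⟨hfeq ▸ hf, by simp⟩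
              · have := (hmem' e).mp he
                exact ⟨this.1, by omega⟩
            · rintro ⟨he, he2⟩
              rcases Nat.lt_or_ge e.2 (pos+2) with hlt | hge
              · have he2' : e.2 = pos ∨ e.2 = pos + 1 := by omega
                rcases he2' with hc | hc
                · exfalso
                  have := huniq e he eo heo pos (Or.inr hc.symm) (Or.inl heo1.symm)
                  omega
                · have hef := huniq e he f hf (pos+1) (Or.inr hc.symm) (Or.inr hf2.symm)
                  have : e = (f.1, pos+1) := Prod.ext hef.1 hc
                  rw [this]
                  exact List.mem_cons_self
              · exact List.mem_cons_of_mem _ ((hmem' e).mpr ⟨he, hge⟩)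
          · have : pathLen (encode M (fuel+1) pos) =
                2 + pathLen (encode M (fuel - 1) (pos+2)) := by
              simp only [encode, hop, hsp, dite_true, pathLen_cons, SchStep.len]
            rw [this, hlen']
            omega
        · -- not special: up step
          obtain ⟨l', hrun', hmem', hlen'⟩ := ih fuel (by omega) (pos+1) (pos :: st)
            (by omega) (by omega)
            (by
              intro x
              constructor
              · intro hx
                rcases List.mem_cons.mp hx with rfl | hx
                · exact ⟨by omega, eo, heo, heo1, by omega⟩
                · obtain ⟨hxlt, g, hg, hg1, hg2⟩ := (hst x).mp hx
                  have hgne : g.2 ≠ pos := by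
                    intro hc
                    have := huniq g hg eo heo pos (Or.inr hc.symm) (Or.inl heo1.symm)
                    omega
                  exact ⟨by omega, g, hg, hg1, by omega⟩
              · rintro ⟨hxlt, g, hg, hg1, hg2⟩
                rcases Nat.lt_or_ge x pos with hxp | hxp
                · exact List.mem_cons_of_mem _ ((hst x).mpr ⟨hxp, g, hg, hg1, by omega⟩)
                · have : x = pos := by omega
                  simp [this])
            (by
              refine List.pairwise_cons.mpr ⟨fun x hx => ?_, hsrt⟩
              have := (hst x).mp hx
              omega)
            (by
              intro g hg hg2 _
              simp only [Nat.add_sub_cancel]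
              by_contra hc
              exact hsp ⟨g, hg, hg2, by omega⟩)
          refine ⟨l', ?_, ?_, ?_⟩
          · have : encode M (fuel+1) pos = .up :: encode M fuel (pos+1) := by
              simp only [encode, hop, hsp, dite_true, dite_false]
            rw [this]
            exact hrun'
          · intro e
            rw [hmem' e]
            constructor
            · rintro ⟨he, he2⟩; exact ⟨he, by omega⟩
            · rintro ⟨he, he2⟩
              refine ⟨he, ?_⟩
              rcases Nat.lt_or_ge e.2 (pos+1) with hlt | hge
              · exfalso
                have hc : e.2 = pos := by omega
                have := huniq e he eo heo pos (Or.inr hc.symm) (Or.inl heo1.symm)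
                omega
              · exact hge
          · have : encode M (fuel+1) pos = .up :: encode M fuel (pos+1) := by
              simp only [encode, hop, hsp, dite_true, dite_false]
            rw [this, pathLen_cons, hlen']
            simp [SchStep.len]
            omega
      · -- pos is a closer
        have hv₀' : pos = e₀.2 := by
          rcases hv₀ with hc | hc
          · exact absurd ⟨e₀, he₀, hc.symm⟩ hop
          · exact hc
        have hist : e₀.1 ∈ st := (hst e₀.1).mpr ⟨by omega, e₀, he₀, rfl, by omega⟩
        have hmax : ∀ b ∈ st, b ≤ e₀.1 := by
          intro b hb
          by_contra hbgt
          obtain ⟨hblt, g, hg, hg1, hg2⟩ := (hst b).mp hb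
          have hbg := hM.1 g hg
          have hgne : g.2 ≠ pos := by
            intro hc
            have := huniq g hg e₀ he₀ pos (Or.inr hc.symm) (Or.inr hv₀')
            omega
          rcases Nat.lt_or_ge (b+2) (pos+1) with hble | hble
          · exact hnc ⟨e₀, he₀, g, hg, by omega, by omega, by omega, by omega⟩
          · have hbeq : b = pos - 1 := by omega
            have := hI2 e₀ he₀ hv₀'.symm (hbeq ▸ hb)
            omega
        obtain ⟨st₂, hst₂⟩ : ∃ t, st = e₀.1 :: t := by
          cases st with
          | nil => simp at hist
          | cons b t =>
              rcases List.mem_cons.mp hist with heq | hmem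
              · exact ⟨t, by rw [heq]⟩
              · have := (List.pairwise_cons.mp hsrt).1 e₀.1 hmem
                have := hmax b (by simp)
                omega
        subst hst₂
        obtain ⟨l', hrun', hmem', hlen'⟩ := ih fuel (by omega) (pos+1) st₂
          (by omega) (by omega)
          (by
            intro x
            constructor
            · intro hx
              obtain ⟨hxlt, g, hg, hg1, hg2⟩ := (hst x).mp (List.mem_cons_of_mem _ hx)
              have hxne : x ≠ e₀.1 := by
                intro hc
                have := (List.pairwise_cons.mp hsrt).1 x hx
                omega
              have hgne : g.2 ≠ pos := by
                intro hc
                have := huniq g hg e₀ he₀ pos (Or.inr hc.symm) (Or.inr hv₀')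
                omega
              exact ⟨by omega, g, hg, hg1, by omega⟩
            · rintro ⟨hxlt, g, hg, hg1, hg2⟩
              have hxnp : x ≠ pos := by
                intro hc
                exact hop ⟨g, hg, by omega⟩
              have hxst : x ∈ e₀.1 :: st₂ := (hst x).mpr ⟨by omega, g, hg, hg1, by omega⟩
              rcases List.mem_cons.mp hxst with heq | hmem
              · exfalso
                have := huniq g hg e₀ he₀ x (Or.inl hg1.symm) (Or.inl heq)
                omega
              · exact hmem)
          ((List.pairwise_cons.mp hsrt).2)
          (by
            intro g hg hg2 hmem
            exfalso
            have := (hst (pos+1-1)).mp (List.mem_cons_of_mem _ hmem)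
            omega)
        refine ⟨(e₀.1, pos) :: l', ?_, ?_, ?_⟩
        · have : encode M (fuel+1) pos = .down :: encode M fuel (pos+1) := by
            simp only [encode, hop, dite_false]
          rw [this]
          simp only [run, Option.map_eq_some_iff]
          exact ⟨l', hrun', rfl⟩
        · intro e
          constructor
          · intro he
            rcases List.mem_cons.mp he with rfl | he
            · have heq : e₀ = (e₀.1, pos) := by rw [hv₀']
              exact ⟨heq ▸ he₀, le_refl _⟩
            · have := (hmem' e).mp he
              exact ⟨this.1, by omega⟩
          · rintro ⟨he, he2⟩
            rcases Nat.lt_or_ge e.2 (pos+1) with hlt | hge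
            · have hc : e.2 = pos := by omega
              have hee := huniq e he e₀ he₀ pos (Or.inr hc.symm) (Or.inr hv₀')
              have : e = (e₀.1, pos) := Prod.ext hee.1 hc
              rw [this]
              exact List.mem_cons_self
            · exact List.mem_cons_of_mem _ ((hmem' e).mpr ⟨he, hge⟩)
        · have : encode M (fuel+1) pos = .down :: encode M fuel (pos+1) := by
            simp only [encode, hop, dite_false]
          rw [this, pathLen_cons, hlen']
          simp [SchStep.len]
          omega

lemma decoded_matching {n : ℕ} {p : List SchStep} {l : List (ℕ × ℕ)}
    (h : run p 1 [] = some l) (hlen : pathLen p = 2*n) :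
    IsMatching n l.toFinset ∧ ¬ Has2DistantCrossing l.toFinset := by
  have hb := run_bounds p 1 [] l h (by simp) (le_refl 1)
  have hmem := run_mem_iff p 1 [] l h
  have hdisj := run_disjoint p 1 [] l h (by simp) (le_refl 1) List.nodup_nil
  constructor
  · constructor
    · intro e he
      rw [List.mem_toFinset] at he
      have := hb e he
      omega
    · intro v hv1 hv2
      obtain ⟨e, he, hve⟩ := (hmem v).mpr (Or.inr ⟨hv1, by omega⟩)
      refine ⟨e, ⟨List.mem_toFinset.mpr he, hve⟩, ?_⟩
      rintro f ⟨hf, hvf⟩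
      rw [List.mem_toFinset] at hf
      apply hdisj f hf e he
      rcases hvf with rfl | rfl <;> rcases hve with h1 | h1 <;> omega
  · rintro ⟨e, he, f, hf, h1, h2, h3, h4⟩
    rw [List.mem_toFinset] at he hf
    exact run_nocross p 1 [] l h (by simp) (le_refl 1) List.Pairwise.nil e he f hf h1 h2 h3 h4

lemma decoded_inj {p q : List SchStep} {l l' : List (ℕ × ℕ)}
    (hp : run p 1 [] = some l) (hq : run q 1 [] = some l')
    (he : l.toFinset = l'.toFinset) : p = q := by
  have s1 := run_sorted p 1 [] l hp
  have s2 := run_sorted q 1 [] l' hq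
  have nd1 : l.Nodup := s1.imp (fun {a b} hab => by intro hc; rw [hc] at hab; omega)
  have nd2 : l'.Nodup := s2.imp (fun {a b} hab => by intro hc; rw [hc] at hab; omega)
  have hperm : l.Perm l' := List.perm_of_nodup_nodup_toFinset_eq nd1 nd2 he
  haveI : IsAntisymm (ℕ × ℕ) (fun e f => e.2 < f.2) :=
    ⟨fun a b hab hba => by omega⟩
  have : l = l' := List.Perm.eq_of_pairwise (fun a b _ _ hab hba => by omega) s1 s2 hperm
  subst this
  exact run_inj p q 1 [] l hp hq (by simp)

theorem matchings_eq_little_schroeder' (n : ℕ) :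
    Nat.card {M : Finset (ℕ × ℕ) // IsMatching n M ∧ ¬ Has2DistantCrossing M} =
      Nat.card {p : List SchStep // IsLittleSchroeder p ∧ pathLen p = 2 * n} := by
  have key : ∀ x : {p : List SchStep // IsLittleSchroeder p ∧ pathLen p = 2 * n},
      ∃ l, run x.1 1 [] = some l := fun x => run_of_little x.2.1
  let F : {p : List SchStep // IsLittleSchroeder p ∧ pathLen p = 2 * n} →
      {M : Finset (ℕ × ℕ) // IsMatching n M ∧ ¬ Has2DistantCrossing M} := fun x =>
    ⟨((run x.1 1 []).getD []).toFinset, by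
      obtain ⟨l, hl⟩ := key x
      rw [hl]
      exact decoded_matching hl x.2.2⟩
  have hinj : Function.Injective F := by
    rintro x y hxy
    obtain ⟨l, hl⟩ := key x
    obtain ⟨l', hl'⟩ := key y
    have : ((run x.1 1 []).getD []).toFinset = ((run y.1 1 []).getD []).toFinset := by
      exact congrArg Subtype.val hxy
    rw [hl, hl'] at this
    simp only [Option.getD_some] at this
    exact Subtype.ext (decoded_inj hl hl' this)
  have hsurj : Function.Surjective F := by
    rintro ⟨M, hm, hnc⟩
    obtain ⟨l, hrun, hmem, hlen⟩ := encode_spec hm hnc (2*n) 1 []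
      (by omega) (le_refl 1)
      (by
        intro a
        simp only [List.not_mem_nil, false_iff]
        rintro ⟨ha, e, he, he1, -⟩
        have := hm.1 e he
        omega)
      List.Pairwise.nil
      (by intro f hf h1 h2; simp at h2)
    have hlcl : l.toFinset = M := by
      ext e
      rw [List.mem_toFinset, hmem e]
      constructor
      · exact fun h => h.1
      · intro h
        have := hm.1 e h
        exact ⟨h, by omega⟩
    refine ⟨⟨encode M (2*n) 1, little_of_run hrun, hlen⟩, ?_⟩
    apply Subtype.ext
    show ((run (encode M (2*n) 1) 1 []).getD []).toFinset = M
    rw [hrun]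
    simpa using hlcl
  exact (Nat.card_eq_of_bijective F ⟨hinj, hsurj⟩).symm

end TD

/-- The number of 2-distant noncrossing matchings of `[2n]` equals the number of little
Schröder paths of length `2n`. -/
theorem matchings_eq_little_schroeder (n : ℕ) :
    Nat.card {M : Finset (ℕ × ℕ) // IsMatching n M ∧ ¬ Has2DistantCrossing M} =
      Nat.card {p : List SchStep // IsLittleSchroeder p ∧ pathLen p = 2 * n} :=
  TD.matchings_eq_little_schroeder' n
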